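/- Let v = e_1 + e_2, let Δ(F_4) be the convex hull of R(F_4), let σ be the convex cone generated by Δ(F_4) − v, and let S be the 14-element set {−e_1, −e_2} ∪ {ε e_j − e_i : i ∈ {1,2}, j ∈ {3,4}, ε ∈ {1, −1}} ∪ {(−e_1 − e_2 + ε_3 e_3 + ε_4 e_4)/2 : ε_3, ε_4 ∈ {1, −1}}. If C is a finite subset of M(F_4) with 0 ∉ C and C ⊆ σ, such that for every root u ∈ R(F_4) the vector u − v can be written as a finite sum of elements of C with nonnegative integer coefficients, then S ⊆ C; in particular C has at least 14 elements. -/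

import Mathlib

noncomputable section

/-- The standard basis vector `e i` of `ℝ^4` (0-based: `b 0` is `e₁`, …, `b 3` is `e₄`). -/
def b (i : Fin 4) : Fin 4 → ℝ := Pi.single i 1

/-- The 48 roots of type `F₄`: `±e_i`, `±e_i ± e_j` (`i ≠ j`), and
`(±e₁ ± e₂ ± e₃ ± e₄)/2`. -/
def rootsF4 : Set (Fin 4 → ℝ) :=
  {v | ∃ (i : Fin 4) (ε : ℝ), (ε = 1 ∨ ε = -1) ∧ v = ε • b i} ∪
  {v | ∃ (i j : Fin 4) (ε δ : ℝ), i ≠ j ∧ (ε = 1 ∨ ε = -1) ∧ (δ = 1 ∨ δ = -1) ∧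
    v = ε • b i + δ • b j} ∪
  {v | ∃ ε : Fin 4 → ℝ, (∀ i, ε i = 1 ∨ ε i = -1) ∧ v = (1 / 2 : ℝ) • ∑ i, ε i • b i}

/-- The weight lattice of `F₄`: `ℤ⁴ + ℤ·(1/2, 1/2, 1/2, 1/2)`. -/
def MF4 : AddSubgroup (Fin 4 → ℝ) :=
  AddSubgroup.closure ({v | ∃ i : Fin 4, v = b i} ∪ {fun _ => (1 / 2 : ℝ)})

/-- The convex cone generated by a set `S`: all finite sums of nonnegative real multiples
of elements of `S`. -/
def coneGen {V : Type*} [AddCommMonoid V] [Module ℝ V] (S : Set V) : Set V :=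
  {x | ∃ (n : ℕ) (c : Fin n → ℝ) (f : Fin n → V),
    (∀ i, 0 ≤ c i) ∧ (∀ i, f i ∈ S) ∧ x = ∑ i, c i • f i}

/-- The vertex `v = e₁ + e₂`. -/
def vF4 : Fin 4 → ℝ := b 0 + b 1

/-- The cone `σ` generated by `Δ(F₄) - v`. -/
def sigmaF4 : Set (Fin 4 → ℝ) := coneGen ((fun x => x - vF4) '' convexHull ℝ rootsF4)

/-- The `14`-element set `S` of the statement:
`{-e₁, -e₂} ∪ {±e_j - e_i : i ∈ {1,2}, j ∈ {3,4}} ∪ {(-e₁ - e₂ ± e₃ ± e₄)/2}`. -/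
def SF4 : Set (Fin 4 → ℝ) :=
  {-b 0, -b 1} ∪
  {w | ∃ (i j : Fin 4) (ε : ℝ), (i = 0 ∨ i = 1) ∧ (j = 2 ∨ j = 3) ∧ (ε = 1 ∨ ε = -1) ∧
    w = ε • b j - b i} ∪
  {w | ∃ ε₃ ε₄ : ℝ, (ε₃ = 1 ∨ ε₃ = -1) ∧ (ε₄ = 1 ∨ ε₄ = -1) ∧
    w = (1 / 2 : ℝ) • (-b 0 - b 1 + ε₃ • b 2 + ε₄ • b 3)}

/-! ### Auxiliary machinery -/

/-- The linear functional `x ↦ ∑ i, c i * x i`. -/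
noncomputable def Lc (c : Fin 4 → ℝ) : (Fin 4 → ℝ) →ₗ[ℝ] ℝ where
  toFun x := ∑ i, c i * x i
  map_add' x y := by simp [mul_add, Finset.sum_add_distrib]
  map_smul' r x := by simp [Finset.mul_sum, mul_left_comm]

@[simp] lemma Lc_b (c : Fin 4 → ℝ) (i : Fin 4) : Lc c (b i) = c i := by
  simp [Lc, b, Pi.single_apply]

lemma Lc_apply (c x : Fin 4 → ℝ) : Lc c x = ∑ i, c i * x i := rfl

lemma Lc_half (c : Fin 4 → ℝ) (ε : Fin 4 → ℝ) :
    Lc c ((1/2 : ℝ) • ∑ i, ε i • b i) = (∑ i, ε i * c i)/2 := by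
  rw [map_smul, map_sum]
  simp [smul_eq_mul]
  ring_nf

lemma Lc_v (c : Fin 4 → ℝ) : Lc c vF4 = c 0 + c 1 := by
  rw [vF4, map_add, Lc_b, Lc_b]

lemma root_bound (c : Fin 4 → ℝ) (h0 : ∀ i, |c i| ≤ c 0 + c 1)
    (h1 : ∀ i j, i ≠ j → |c i| + |c j| ≤ c 0 + c 1)
    (h2 : (∑ i, |c i|)/2 ≤ c 0 + c 1) :
    ∀ u ∈ rootsF4, Lc c u ≤ c 0 + c 1 := by
  intro u hu
  simp only [rootsF4, Set.mem_union, Set.mem_setOf_eq] at hu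
  obtain (⟨i, ε, hε, rfl⟩ | ⟨i, j, ε, δ, hij, hε, hδ, rfl⟩) | ⟨ε, hε, rfl⟩ := hu
  · rw [map_smul, Lc_b, smul_eq_mul]
    calc ε * c i ≤ |ε * c i| := le_abs_self _
      _ ≤ |c i| := by rcases hε with rfl | rfl <;> simp [abs_mul]
      _ ≤ _ := h0 i
  · rw [map_add, map_smul, map_smul, Lc_b, Lc_b, smul_eq_mul, smul_eq_mul]
    calc ε * c i + δ * c j ≤ |ε * c i| + |δ * c j| :=
          add_le_add (le_abs_self _) (le_abs_self _)
      _ = |c i| + |c j| := by rcases hε with rfl | rfl <;> rcases hδ with rfl | rfl <;>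
          simp [abs_mul]
      _ ≤ _ := h1 i j hij
  · rw [Lc_half]
    refine le_trans ?_ h2
    gcongr
    calc ε _ * c _ ≤ |ε _ * c _| := le_abs_self _
      _ ≤ |c _| := by rcases hε ‹_› with h | h <;> simp [abs_mul, h]

lemma sigma_le (c : Fin 4 → ℝ) (hc : ∀ u ∈ rootsF4, Lc c u ≤ c 0 + c 1) :
    ∀ x ∈ sigmaF4, Lc c x ≤ 0 := by
  have hhull : ∀ p ∈ convexHull ℝ rootsF4, Lc c p ≤ c 0 + c 1 := by
    intro p hp
    exact convexHull_min hc (convex_halfSpace_le (Lc c).isLinear _) hp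
  rintro x ⟨n, a, f, ha, hf, rfl⟩
  rw [map_sum]
  refine Finset.sum_nonpos fun i _ => ?_
  obtain ⟨p, hp, hfi⟩ := hf i
  rw [map_smul, smul_eq_mul]
  have : Lc c (f i) ≤ 0 := by
    rw [← hfi, map_sub, Lc_v]; linarith [hhull p hp]
  exact mul_nonpos_of_nonneg_of_nonpos (ha i) this

set_option maxHeartbeats 1000000 in
lemma sigma_bounds (x : Fin 4 → ℝ) (hx : x ∈ sigmaF4) :
    x 0 ≤ 0 ∧ x 1 ≤ 0 ∧ x 0 + x 1 + x 2 ≤ 0 ∧ x 0 + x 1 - x 2 ≤ 0 ∧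
    x 0 + x 1 + x 3 ≤ 0 ∧ x 0 + x 1 - x 3 ≤ 0 := by
  have H : ∀ c : Fin 4 → ℝ, (∀ i, |c i| ≤ c 0 + c 1) →
      (∀ i j, i ≠ j → |c i| + |c j| ≤ c 0 + c 1) →
      ((∑ i, |c i|)/2 ≤ c 0 + c 1) → ∑ i, c i * x i ≤ 0 :=
    fun c h0 h1 h2 => sigma_le c (root_bound c h0 h1 h2) x hx
  have e1 := H ![1,0,0,0] (by intro i; fin_cases i <;> norm_num)
    (by intro i j hij; fin_cases i <;> fin_cases j <;>
      first | exact absurd rfl hij | norm_num)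
    (by norm_num [Fin.sum_univ_four, Matrix.cons_val_two, Matrix.cons_val_three, Matrix.tail_cons, Matrix.head_cons])
  have e2 := H ![0,1,0,0] (by intro i; fin_cases i <;> norm_num)
    (by intro i j hij; fin_cases i <;> fin_cases j <;>
      first | exact absurd rfl hij | norm_num)
    (by norm_num [Fin.sum_univ_four, Matrix.cons_val_two, Matrix.cons_val_three, Matrix.tail_cons, Matrix.head_cons])
  have e3 := H ![1,1,1,0] (by intro i; fin_cases i <;> norm_num)
    (by intro i j hij; fin_cases i <;> fin_cases j <;>
      first | exact absurd rfl hij | norm_num)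
    (by norm_num [Fin.sum_univ_four, Matrix.cons_val_two, Matrix.cons_val_three, Matrix.tail_cons, Matrix.head_cons])
  have e4 := H ![1,1,-1,0] (by intro i; fin_cases i <;> norm_num)
    (by intro i j hij; fin_cases i <;> fin_cases j <;>
      first | exact absurd rfl hij | norm_num)
    (by norm_num [Fin.sum_univ_four, Matrix.cons_val_two, Matrix.cons_val_three, Matrix.tail_cons, Matrix.head_cons])
  have e5 := H ![1,1,0,1] (by intro i; fin_cases i <;> norm_num)
    (by intro i j hij; fin_cases i <;> fin_cases j <;>
      first | exact absurd rfl hij | norm_num)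
    (by norm_num [Fin.sum_univ_four, Matrix.cons_val_two, Matrix.cons_val_three, Matrix.tail_cons, Matrix.head_cons])
  have e6 := H ![1,1,0,-1] (by intro i; fin_cases i <;> norm_num)
    (by intro i j hij; fin_cases i <;> fin_cases j <;>
      first | exact absurd rfl hij | norm_num)
    (by norm_num [Fin.sum_univ_four, Matrix.cons_val_two, Matrix.cons_val_three, Matrix.tail_cons, Matrix.head_cons])
  norm_num [Fin.sum_univ_four, Matrix.cons_val_two, Matrix.cons_val_three, Matrix.tail_cons, Matrix.head_cons] at e1 e2 e3 e4 e5 e6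
  refine ⟨e1, e2, by linarith, by linarith, by linarith, by linarith⟩

lemma lattice_int (x : Fin 4 → ℝ) (hx : x ∈ MF4) : ∃ n : ℤ, x 0 + x 1 = n := by
  have hle : MF4 ≤ AddSubgroup.comap
      ((Pi.evalAddMonoidHom (fun _ : Fin 4 => ℝ) 0) + (Pi.evalAddMonoidHom _ 1))
      (AddSubgroup.zmultiples (1 : ℝ)) := by
    rw [MF4]
    apply AddSubgroup.closure_le _ |>.2
    rintro v (⟨i, rfl⟩ | rfl)
    · fin_cases i <;>
        simp only [SetLike.mem_coe, AddSubgroup.mem_comap, AddMonoidHom.add_apply,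
          Pi.evalAddMonoidHom_apply, AddSubgroup.mem_zmultiples_iff]
      · exact ⟨1, by simp [b, Pi.single_apply]⟩
      · exact ⟨1, by simp [b, Pi.single_apply]⟩
      · exact ⟨0, by simp [b, Pi.single_apply]⟩
      · exact ⟨0, by simp [b, Pi.single_apply]⟩
    · simp only [SetLike.mem_coe, AddSubgroup.mem_comap, AddMonoidHom.add_apply,
        Pi.evalAddMonoidHom_apply, AddSubgroup.mem_zmultiples_iff]
      exact ⟨1, by norm_num⟩
  have h2 := hle hx
  simp only [AddSubgroup.mem_comap, AddMonoidHom.add_apply, Pi.evalAddMonoidHom_apply,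
    AddSubgroup.mem_zmultiples_iff] at h2
  obtain ⟨n, hn⟩ := h2
  exact ⟨n, by rw [← hn]; simp⟩

lemma fin4_val_zero : ((0:Fin 4):ℕ) = 0 := rfl
lemma fin4_val_one : ((1:Fin 4):ℕ) = 1 := rfl
lemma fin4_val_two : ((2:Fin 4):ℕ) = 2 := rfl
lemma fin4_val_three : ((3:Fin 4):ℕ) = 3 := rfl

/-- Integer doubles of the 14 vectors of `SF4`. -/
def GF : Fin 14 → Fin 4 → ℤ :=
  ![![-2,0,0,0], ![0,-2,0,0],
    ![-2,0,2,0], ![-2,0,-2,0], ![-2,0,0,2], ![-2,0,0,-2],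
    ![0,-2,2,0], ![0,-2,-2,0], ![0,-2,0,2], ![0,-2,0,-2],
    ![-1,-1,1,1], ![-1,-1,1,-1], ![-1,-1,-1,1], ![-1,-1,-1,-1]]

/-- The 14 vectors of `SF4`, as an explicit family. -/
noncomputable def gF : Fin 14 → Fin 4 → ℝ := fun k i => (GF k i : ℝ)/2

lemma gF_injective : Function.Injective gF := by
  have hG : Function.Injective GF := by decide
  intro a c h
  apply hG
  funext i
  have h1 := congrFun h i
  simp only [gF] at h1
  have h2 : ((GF a i : ℝ)) = GF c i := by linarith
  exact_mod_cast h2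

set_option maxHeartbeats 1000000 in
lemma gF_mem : ∀ k, gF k ∈ SF4 := by
  have e1 : ∀ w, w = -b 0 ∨ w = -b 1 → w ∈ SF4 := fun w h => Or.inl (Or.inl h)
  have e2 : ∀ w, (∃ (i j : Fin 4) (ε : ℝ), (i = 0 ∨ i = 1) ∧ (j = 2 ∨ j = 3) ∧
      (ε = 1 ∨ ε = -1) ∧ w = ε • b j - b i) → w ∈ SF4 := fun w h => Or.inl (Or.inr h)
  have e3 : ∀ w, (∃ ε₃ ε₄ : ℝ, (ε₃ = 1 ∨ ε₃ = -1) ∧ (ε₄ = 1 ∨ ε₄ = -1) ∧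
      w = (1 / 2 : ℝ) • (-b 0 - b 1 + ε₃ • b 2 + ε₄ • b 3)) → w ∈ SF4 :=
    fun w h => Or.inr h
  intro k
  fin_cases k
  · exact e1 _ (Or.inl (by funext i; fin_cases i <;> norm_num [gF, GF, b, Pi.single_apply, Fin.ext_iff, fin4_val_zero, fin4_val_one, fin4_val_two, fin4_val_three]))
  · exact e1 _ (Or.inr (by funext i; fin_cases i <;> norm_num [gF, GF, b, Pi.single_apply, Fin.ext_iff, fin4_val_zero, fin4_val_one, fin4_val_two, fin4_val_three]))
  · exact e2 _ ⟨0, 2, 1, Or.inl rfl, Or.inl rfl, Or.inl rfl,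
      by funext i; fin_cases i <;> norm_num [gF, GF, b, Pi.single_apply, Fin.ext_iff, fin4_val_zero, fin4_val_one, fin4_val_two, fin4_val_three]⟩
  · exact e2 _ ⟨0, 2, -1, Or.inl rfl, Or.inl rfl, Or.inr rfl,
      by funext i; fin_cases i <;> norm_num [gF, GF, b, Pi.single_apply, Fin.ext_iff, fin4_val_zero, fin4_val_one, fin4_val_two, fin4_val_three]⟩
  · exact e2 _ ⟨0, 3, 1, Or.inl rfl, Or.inr rfl, Or.inl rfl,
      by funext i; fin_cases i <;> norm_num [gF, GF, b, Pi.single_apply, Fin.ext_iff, fin4_val_zero, fin4_val_one, fin4_val_two, fin4_val_three]⟩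
  · exact e2 _ ⟨0, 3, -1, Or.inl rfl, Or.inr rfl, Or.inr rfl,
      by funext i; fin_cases i <;> norm_num [gF, GF, b, Pi.single_apply, Fin.ext_iff, fin4_val_zero, fin4_val_one, fin4_val_two, fin4_val_three]⟩
  · exact e2 _ ⟨1, 2, 1, Or.inr rfl, Or.inl rfl, Or.inl rfl,
      by funext i; fin_cases i <;> norm_num [gF, GF, b, Pi.single_apply, Fin.ext_iff, fin4_val_zero, fin4_val_one, fin4_val_two, fin4_val_three]⟩
  · exact e2 _ ⟨1, 2, -1, Or.inr rfl, Or.inl rfl, Or.inr rfl,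
      by funext i; fin_cases i <;> norm_num [gF, GF, b, Pi.single_apply, Fin.ext_iff, fin4_val_zero, fin4_val_one, fin4_val_two, fin4_val_three]⟩
  · exact e2 _ ⟨1, 3, 1, Or.inr rfl, Or.inr rfl, Or.inl rfl,
      by funext i; fin_cases i <;> norm_num [gF, GF, b, Pi.single_apply, Fin.ext_iff, fin4_val_zero, fin4_val_one, fin4_val_two, fin4_val_three]⟩
  · exact e2 _ ⟨1, 3, -1, Or.inr rfl, Or.inr rfl, Or.inr rfl,
      by funext i; fin_cases i <;> norm_num [gF, GF, b, Pi.single_apply, Fin.ext_iff, fin4_val_zero, fin4_val_one, fin4_val_two, fin4_val_three]⟩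
  · exact e3 _ ⟨1, 1, Or.inl rfl, Or.inl rfl,
      by funext i; fin_cases i <;> norm_num [gF, GF, b, Pi.single_apply, Fin.ext_iff, fin4_val_zero, fin4_val_one, fin4_val_two, fin4_val_three]⟩
  · exact e3 _ ⟨1, -1, Or.inl rfl, Or.inr rfl,
      by funext i; fin_cases i <;> norm_num [gF, GF, b, Pi.single_apply, Fin.ext_iff, fin4_val_zero, fin4_val_one, fin4_val_two, fin4_val_three]⟩
  · exact e3 _ ⟨-1, 1, Or.inr rfl, Or.inl rfl,
      by funext i; fin_cases i <;> norm_num [gF, GF, b, Pi.single_apply, Fin.ext_iff, fin4_val_zero, fin4_val_one, fin4_val_two, fin4_val_three]⟩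
  · exact e3 _ ⟨-1, -1, Or.inr rfl, Or.inr rfl,
      by funext i; fin_cases i <;> norm_num [gF, GF, b, Pi.single_apply, Fin.ext_iff, fin4_val_zero, fin4_val_one, fin4_val_two, fin4_val_three]⟩


theorem stmt5 (C : Finset (Fin 4 → ℝ))
    (hCM : ∀ x ∈ C, x ∈ MF4)
    (h0 : (0 : Fin 4 → ℝ) ∉ C)
    (hCσ : ∀ x ∈ C, x ∈ sigmaF4)
    (hgen : ∀ u ∈ rootsF4, ∃ a : (Fin 4 → ℝ) → ℕ,
      u - vF4 = ∑ x ∈ C, (a x : ℝ) • x) :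
    SF4 ⊆ ↑C ∧ 14 ≤ C.card := by
  classical
  -- every element of C satisfies x₀ + x₁ ≤ -1
  have hCb : ∀ x ∈ C, x 0 + x 1 ≤ -1 := by
    intro x hxC
    obtain ⟨b0, b1, b2p, b2m, b3p, b3m⟩ := sigma_bounds x (hCσ x hxC)
    obtain ⟨n, hn⟩ := lattice_int x (hCM x hxC)
    have hne : x 0 + x 1 ≠ 0 := by
      intro h
      apply h0
      have e0 : x 0 = 0 := by linarith
      have e1 : x 1 = 0 := by linarith
      have e2 : x 2 = 0 := by linarith
      have e3 : x 3 = 0 := by linarith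
      have hx0 : x = 0 := by
        funext i
        fin_cases i
        exacts [e0, e1, e2, e3]
      rwa [hx0] at hxC
    have hn0 : (n : ℝ) ≤ 0 := by rw [← hn]; linarith
    have hn0' : n ≤ 0 := by exact_mod_cast hn0
    have hnne : n ≠ 0 := by
      intro h; apply hne; rw [hn, h]; norm_num
    have : n ≤ -1 := by omega
    rw [hn]; exact_mod_cast this
  -- key step : any root u with u₀ + u₁ = 1 gives u - v ∈ C
  have key : ∀ u ∈ rootsF4, u 0 + u 1 = 1 → u - vF4 ∈ C := by
    intro u hu hsum
    obtain ⟨a, ha⟩ := hgen u hu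
    have hcoord : ∀ j, (u - vF4) j = ∑ x ∈ C, (a x : ℝ) * x j := by
      intro j; rw [ha]; simp [Finset.sum_apply]
    have hs01 : ∑ x ∈ C, (a x : ℝ) * (x 0 + x 1) = -1 := by
      have hv0 : vF4 0 = 1 := by simp [vF4, b, Pi.single_apply]
      have hv1 : vF4 1 = 1 := by simp [vF4, b, Pi.single_apply]
      have h0' := hcoord 0
      have h1' := hcoord 1
      simp only [Pi.sub_apply, hv0, hv1] at h0' h1'
      have : ∑ x ∈ C, (a x : ℝ) * (x 0 + x 1)
          = ∑ x ∈ C, (a x : ℝ) * x 0 + ∑ x ∈ C, (a x : ℝ) * x 1 := by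
        rw [← Finset.sum_add_distrib]
        exact Finset.sum_congr rfl fun x _ => by ring
      rw [this, ← h0', ← h1']
      linarith
    have hsumle : ∑ x ∈ C, (a x : ℝ) ≤ 1 := by
      have step : ∑ x ∈ C, (a x : ℝ) ≤ ∑ x ∈ C, (a x : ℝ) * (-(x 0 + x 1)) := by
        refine Finset.sum_le_sum fun x hx => ?_
        have h1 : (1:ℝ) ≤ -(x 0 + x 1) := by linarith [hCb x hx]
        calc (a x : ℝ) = (a x : ℝ) * 1 := by ring
          _ ≤ (a x : ℝ) * (-(x 0 + x 1)) :=
              mul_le_mul_of_nonneg_left h1 (Nat.cast_nonneg _)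
      have : ∑ x ∈ C, (a x : ℝ) * (-(x 0 + x 1))
          = -∑ x ∈ C, (a x : ℝ) * (x 0 + x 1) := by
        rw [← Finset.sum_neg_distrib]
        exact Finset.sum_congr rfl fun x _ => by ring
      rw [this, hs01] at step
      linarith
    have hN : (∑ x ∈ C, a x) ≤ 1 := by
      have : ((∑ x ∈ C, a x : ℕ) : ℝ) ≤ 1 := by push_cast; exact hsumle
      exact_mod_cast this
    have hNe : (∑ x ∈ C, a x) ≠ 0 := by
      intro hz
      rw [Finset.sum_eq_zero_iff] at hz
      have : ∑ x ∈ C, (a x : ℝ) * (x 0 + x 1) = 0 :=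
        Finset.sum_eq_zero fun x hx => by rw [hz x hx]; norm_num
      rw [hs01] at this; norm_num at this
    have hsum1 : ∑ x ∈ C, a x = 1 := le_antisymm hN (Nat.one_le_iff_ne_zero.2 hNe)
    obtain ⟨x₀, hx₀C, hax₀⟩ : ∃ x ∈ C, a x ≠ 0 := by
      by_contra h
      push_neg at h
      exact hNe (Finset.sum_eq_zero fun x hx => h x hx)
    have herase := Finset.sum_erase_add C a hx₀C
    rw [hsum1] at herase
    have hax1 : a x₀ = 1 := by omega
    have hzero : ∑ y ∈ C.erase x₀, a y = 0 := by omega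
    rw [Finset.sum_eq_zero_iff] at hzero
    have : u - vF4 = x₀ := by
      rw [ha, ← Finset.sum_erase_add C _ hx₀C, hax1]
      rw [Finset.sum_eq_zero fun y hy => by rw [hzero y hy]; simp]
      simp
    rwa [this]
  have hsub : SF4 ⊆ ↑C := by
    intro s hs
    rw [Finset.mem_coe]
    simp only [SF4, Set.mem_union, Set.mem_insert_iff, Set.mem_singleton_iff,
      Set.mem_setOf_eq] at hs
    have mem1 : ∀ w, (∃ (i : Fin 4) (ε : ℝ), (ε = 1 ∨ ε = -1) ∧ w = ε • b i) →
        w ∈ rootsF4 := fun w h => Or.inl (Or.inl h)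
    have mem2 : ∀ w, (∃ (i j : Fin 4) (ε δ : ℝ), i ≠ j ∧ (ε = 1 ∨ ε = -1) ∧
        (δ = 1 ∨ δ = -1) ∧ w = ε • b i + δ • b j) → w ∈ rootsF4 :=
      fun w h => Or.inl (Or.inr h)
    have mem3 : ∀ w, (∃ ε : Fin 4 → ℝ, (∀ i, ε i = 1 ∨ ε i = -1) ∧
        w = (1 / 2 : ℝ) • ∑ i, ε i • b i) → w ∈ rootsF4 := fun w h => Or.inr h
    obtain ((rfl | rfl) | ⟨i, j, ε, hi, hj, hε, rfl⟩) | ⟨ε₃, ε₄, h3, h4, rfl⟩ := hs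
    · have h := key (b 1) (mem1 _ ⟨1, 1, Or.inl rfl, (one_smul ℝ _).symm⟩)
        (by simp [b, Pi.single_apply])
      have e : b 1 - vF4 = -b 0 := by rw [vF4]; abel
      rwa [e] at h
    · have h := key (b 0) (mem1 _ ⟨0, 1, Or.inl rfl, (one_smul ℝ _).symm⟩)
        (by simp [b, Pi.single_apply])
      have e : b 0 - vF4 = -b 1 := by rw [vF4]; abel
      rwa [e] at h
    · rcases hi with rfl | rfl
      · have h := key (b 1 + ε • b j)
          (mem2 _ ⟨1, j, 1, ε, by rcases hj with rfl | rfl <;> decide, Or.inl rfl, hε,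
            by rw [one_smul]⟩)
          (by rcases hj with rfl | rfl <;> simp [b, Pi.single_apply])
        have e : b 1 + ε • b j - vF4 = ε • b j - b 0 := by rw [vF4]; abel
        rwa [e] at h
      · have h := key (b 0 + ε • b j)
          (mem2 _ ⟨0, j, 1, ε, by rcases hj with rfl | rfl <;> decide, Or.inl rfl, hε,
            by rw [one_smul]⟩)
          (by rcases hj with rfl | rfl <;> simp [b, Pi.single_apply])
        have e : b 0 + ε • b j - vF4 = ε • b j - b 1 := by rw [vF4]; abel
        rwa [e] at h
    · have h := key ((1/2 : ℝ) • ∑ i, (![1,1,ε₃,ε₄] : Fin 4 → ℝ) i • b i)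
        (mem3 _ ⟨![1,1,ε₃,ε₄], by intro i; fin_cases i <;> simp <;> tauto, rfl⟩)
        (by simp [Fin.sum_univ_four, b, Pi.single_apply]; norm_num)
      have e : (1/2 : ℝ) • ∑ i, (![1,1,ε₃,ε₄] : Fin 4 → ℝ) i • b i - vF4
          = (1/2 : ℝ) • (-b 0 - b 1 + ε₃ • b 2 + ε₄ • b 3) := by
        rw [Fin.sum_univ_four, vF4]
        simp only [Matrix.cons_val_zero, Matrix.cons_val_one, Matrix.head_cons,
          Matrix.cons_val_two, Matrix.tail_cons, Matrix.cons_val_three]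
        module
      rwa [e] at h
  refine ⟨hsub, ?_⟩
  have hle : (Finset.univ : Finset (Fin 14)).card ≤ C.card :=
    Finset.card_le_card_of_injOn gF
      (fun k _ => by exact hsub (gF_mem k))
      (gF_injective.injOn)
  simpa using hle
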